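/- If a feasible solution x of F-CVRP-TSP (integer, all routes TSP-optimal, capacities respected) satisfies the degree constraints, then x satisfies simultaneously all TSP-optimality cuts (equation form: x(A(P)) ≤ |A(P)| - 1 for every TSP-violating depot-intermediate-free path P); conversely, any integer solution of the F-CVRP master problem satisfying all these cuts uses only TSP-optimal routes. -/

import Mathlib

variable {V : Type*}

/-- The list of arcs (consecutive node pairs) of a node list. -/
def arcsOf (l : List V) : List (V × V) := l.zip l.tail

/-- The length of a path given as a node list: the sum of its arc distances. -/
def plen (d : V → V → ℝ) (l : List V) : ℝ :=
  ((arcsOf l).map (fun a => d a.1 a.2)).sum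

/-- A path is TSP-violating if some path on the same node set with
the same endpoints is strictly shorter. -/
def TSPviolating (d : V → V → ℝ) (P : List V) : Prop :=
  ∃ Q : List V, Q.Perm P ∧ Q.head? = P.head? ∧ Q.getLast? = P.getLast? ∧
    plen d Q < plen d P

/-- Length of the route visiting customers `c` in order,
starting and ending at the depot. -/
def routeLen (d : V → V → ℝ) (depot : V) (c : List V) : ℝ :=
  plen d (depot :: c ++ [depot])

/-- A route (given by its ordered customer list) is TSP-optimal:
no reordering of its customers gives a strictly shorter route. -/
def TSPopt (d : V → V → ℝ) (depot : V) (c : List V) : Prop :=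
  ∀ c' : List V, c'.Perm c → routeLen d depot c ≤ routeLen d depot c'

/-- Arc flow of a set of selected routes: the number of selected routes using arc `a`. -/
def flow [DecidableEq V] (depot : V) (routes : List (List V)) (a : V × V) : ℤ :=
  (routes.map (fun c => ((arcsOf (depot :: c ++ [depot])).count a : ℤ))).sum

section Helpers

variable {V : Type*}

lemma arcsOf_nil : arcsOf ([] : List V) = [] := rfl
lemma arcsOf_single (a : V) : arcsOf [a] = [] := rfl
lemma arcsOf_cons₂ (a b : V) (l : List V) :
    arcsOf (a :: b :: l) = (a, b) :: arcsOf (b :: l) := rfl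

lemma arcsOf_append_cons (A : List V) (x : V) (B : List V) :
    arcsOf (A ++ x :: B) = arcsOf (A ++ [x]) ++ arcsOf (x :: B) := by
  induction A with
  | nil => simp [arcsOf_single]
  | cons a A ih =>
    cases A with
    | nil => simp [arcsOf_cons₂, arcsOf_single]
    | cons a' A' =>
      simp only [List.cons_append, arcsOf_cons₂] at *
      rw [ih]

lemma plen_append_cons (d : V → V → ℝ) (A : List V) (x : V) (B : List V) :
    plen d (A ++ x :: B) = plen d (A ++ [x]) + plen d (x :: B) := by
  unfold plen
  rw [arcsOf_append_cons, List.map_append, List.sum_append]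

lemma mem_arcsOf {u v : V} {l : List V} (h : (u, v) ∈ arcsOf l) :
    ∃ A B, l = A ++ u :: v :: B := by
  induction l with
  | nil => simp [arcsOf_nil] at h
  | cons a l ih =>
    cases l with
    | nil => simp [arcsOf_single] at h
    | cons b l' =>
      rw [arcsOf_cons₂] at h
      rcases List.mem_cons.mp h with h | h
      · obtain ⟨rfl, rfl⟩ := Prod.ext_iff.mp h.symm
        exact ⟨[], l', rfl⟩
      · obtain ⟨A, B, hAB⟩ := ih h
        exact ⟨a :: A, B, by simp [hAB]⟩

lemma count_zip_left [DecidableEq V] (u v : V) :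
    ∀ (l₁ l₂ : List V), ((l₁.zip l₂).count (u, v)) ≤ l₁.count u := by
  intro l₁
  induction l₁ with
  | nil => simp
  | cons a l ih =>
    intro l₂
    cases l₂ with
    | nil => simp
    | cons b l₂' =>
      rw [List.zip_cons_cons]
      by_cases hab : (u, v) = (a, b)
      · obtain ⟨rfl, rfl⟩ := Prod.ext_iff.mp hab
        rw [List.count_cons_self, List.count_cons_self]
        exact Nat.succ_le_succ (ih l₂')
      · rw [List.count_cons_of_ne (Ne.symm hab)]
        exact le_trans (ih l₂') ((List.sublist_cons_self a l).count_le u)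

lemma count_zip_right [DecidableEq V] (u v : V) :
    ∀ (l₁ l₂ : List V), ((l₁.zip l₂).count (u, v)) ≤ l₂.count v := by
  intro l₁
  induction l₁ with
  | nil => simp
  | cons a l ih =>
    intro l₂
    cases l₂ with
    | nil => simp
    | cons b l₂' =>
      rw [List.zip_cons_cons]
      by_cases hab : (u, v) = (a, b)
      · obtain ⟨rfl, rfl⟩ := Prod.ext_iff.mp hab
        rw [List.count_cons_self, List.count_cons_self]
        exact Nat.succ_le_succ (ih l₂')
      · rw [List.count_cons_of_ne (Ne.symm hab)]
        exact le_trans (ih l₂') ((List.sublist_cons_self b l₂').count_le v)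

lemma pre_eq {v : V} : ∀ (A A' B B' : List V), A ++ v :: B = A' ++ v :: B' →
    v ∉ A → v ∉ A' → A = A' ∧ B = B' := by
  intro A
  induction A with
  | nil =>
    intro A' B B' h hA hA'
    cases A' with
    | nil => simpa using h
    | cons a' T =>
      simp only [List.nil_append, List.cons_append, List.cons.injEq] at h
      exact absurd (by rw [h.1]; exact List.mem_cons_self) hA'
  | cons a T ih =>
    intro A' B B' h hA hA'
    cases A' with
    | nil =>
      simp only [List.cons_append, List.nil_append, List.cons.injEq] at h
      exact absurd (by rw [← h.1]; exact List.mem_cons_self) hA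
    | cons a' T' =>
      simp only [List.cons_append, List.cons.injEq] at h
      obtain ⟨rfl, h2⟩ := h
      obtain ⟨h3, h4⟩ := ih T' B B' h2 (fun hv => hA (List.mem_cons_of_mem _ hv))
        (fun hv => hA' (List.mem_cons_of_mem _ hv))
      exact ⟨by rw [h3], h4⟩

lemma exists_cons_concat {l : List V} (h : 2 ≤ l.length) :
    ∃ a M b, l = a :: M ++ [b] := by
  cases l with
  | nil => simp at h
  | cons a t =>
    rcases List.eq_nil_or_concat t with rfl | ⟨M, b, rfl⟩
    · simp at h
    · exact ⟨a, M, b, by simp⟩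

lemma head_last_decomp {l : List V} {a b : V} (hlen : 2 ≤ l.length)
    (hh : l.head? = some a) (hl : l.getLast? = some b) :
    ∃ M, l = a :: M ++ [b] := by
  obtain ⟨a', M, b', rfl⟩ := exists_cons_concat hlen
  have ha : a' = a := by simpa using hh
  have hb : b' = b := by
    have h2 : (a' :: M ++ [b']).getLast? = some b' := by
      rw [show a' :: M ++ [b'] = (a' :: M) ++ [b'] from rfl, List.getLast?_concat]
    rw [h2] at hl; exact (Option.some.injEq .. ▸ hl :)
  exact ⟨M, by rw [ha, hb]⟩

lemma not_violating_small (d : V → V → ℝ) {P : List V} (h : P.length ≤ 1) :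
    ¬ TSPviolating d P := by
  rintro ⟨Q, hperm, hh, hl, hlt⟩
  have : Q = P := by
    cases P with
    | nil => exact hperm.eq_nil
    | cons x t =>
      cases t with
      | nil => exact List.perm_singleton.mp hperm
      | cons y t' => simp at h
  rw [this] at hlt; exact lt_irrefl _ hlt

lemma perm_pair {x : V} {Q : List V} (h : Q.Perm [x, x]) : Q = [x, x] := by
  have hlen : Q.length = 2 := by simpa using h.length_eq
  match Q, hlen with
  | [a, b], _ =>
    have ha : a = x := by
      have : a ∈ [x, x] := h.mem_iff.mp (by simp)
      simpa using this
    have hb : b = x := by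
      have : b ∈ [x, x] := h.mem_iff.mp (by simp)
      simpa using this
    rw [ha, hb]

lemma sum_map_le_length {α : Type*} (f : α → ℤ) (l : List α) (h : ∀ a ∈ l, f a ≤ 1) :
    (l.map f).sum ≤ l.length := by
  induction l with
  | nil => simp
  | cons a t ih =>
    simp only [List.map_cons, List.sum_cons, List.length_cons]
    have h1 := h a (List.mem_cons_self)
    have h2 := ih (fun b hb => h b (List.mem_cons_of_mem _ hb))
    push_cast
    omega

lemma length_le_sum_map {α : Type*} (f : α → ℤ) (l : List α) (h : ∀ a ∈ l, 1 ≤ f a) :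
    (l.length : ℤ) ≤ (l.map f).sum := by
  induction l with
  | nil => simp
  | cons a t ih =>
    simp only [List.map_cons, List.sum_cons, List.length_cons]
    have h1 := h a (List.mem_cons_self)
    have h2 := ih (fun b hb => h b (List.mem_cons_of_mem _ hb))
    push_cast
    omega

lemma depot_arc_not_mem {depot : V} {P : List V}
    (hint : depot ∉ (P.drop 1).dropLast) (hP : P ≠ [depot, depot]) :
    (depot, depot) ∉ arcsOf P := by
  intro hmem
  obtain ⟨A, B, hPeq⟩ := mem_arcsOf hmem
  subst hPeq
  cases A with
  | nil =>
    cases B with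
    | nil => exact hP rfl
    | cons b B' =>
      apply hint
      simp only [List.nil_append, List.drop_succ_cons, List.drop_zero, List.dropLast_cons₂]
      exact List.mem_cons_self
  | cons a A' =>
    apply hint
    have hd : ((a :: (A' ++ depot :: depot :: B)).drop 1) = A' ++ depot :: depot :: B := rfl
    rw [List.cons_append, hd, List.dropLast_append_of_ne_nil (by simp : depot :: depot :: B ≠ []),
      List.dropLast_cons₂]
    exact List.mem_append_right _ (List.mem_cons_self)

section RouteLemmas
variable [DecidableEq V] {depot : V} {routes : List (List V)}

lemma count_route {u : V} (hu : u ≠ depot) (c : List V) :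
    (depot :: c ++ [depot]).count u = c.count u := by
  simp [List.count_cons, List.count_append, hu, Ne.symm hu]

lemma flow_nonneg (a : V × V) : 0 ≤ flow depot routes a := by
  apply List.sum_nonneg
  intro x hx
  obtain ⟨c, _, rfl⟩ := List.mem_map.mp hx
  positivity

lemma flow_pos_mem {a : V × V} (h : 0 < flow depot routes a) :
    ∃ c ∈ routes, a ∈ arcsOf (depot :: c ++ [depot]) := by
  by_contra hcon
  push_neg at hcon
  have : flow depot routes a = 0 := by
    unfold flow
    rw [List.sum_eq_zero]
    intro x hx
    obtain ⟨c, hc, rfl⟩ := List.mem_map.mp hx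
    simp only [Nat.cast_eq_zero]
    exact List.count_eq_zero.mpr (hcon c hc)
  omega

lemma flow_le_one
    (hcover : ∀ u : V, u ≠ depot → (routes.map (fun c => (c.count u : ℤ))).sum = 1)
    {u v : V} (h : (u, v) ≠ (depot, depot)) :
    flow depot routes (u, v) ≤ 1 := by
  by_cases hu : u = depot
  · have hv : v ≠ depot := fun hv => h (by rw [hu, hv])
    calc flow depot routes (u, v)
        ≤ (routes.map (fun c => (c.count v : ℤ))).sum := by
          apply List.sum_le_sum
          intro c _
          have h1 : (arcsOf (depot :: c ++ [depot])).count (u, v)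
              ≤ (depot :: c ++ [depot]).tail.count v := count_zip_right _ _ _ _
          have h2 : (depot :: c ++ [depot]).tail.count v = c.count v := by
            simp [List.count_append, hv, List.count_singleton', Ne.symm hv]
          omega
      _ = 1 := hcover v hv
  · calc flow depot routes (u, v)
        ≤ (routes.map (fun c => (c.count u : ℤ))).sum := by
          apply List.sum_le_sum
          intro c _
          have h1 : (arcsOf (depot :: c ++ [depot])).count (u, v)
              ≤ (depot :: c ++ [depot]).count u := by
            unfold arcsOf
            exact le_trans (count_zip_left _ _ _ _) (le_refl _)
          rw [count_route hu] at h1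
          omega
      _ = 1 := hcover u hu

lemma unique_route
    (hcover : ∀ u : V, u ≠ depot → (routes.map (fun c => (c.count u : ℤ))).sum = 1)
    {v : V} (hv : v ≠ depot) {c₁ c₂ : List V} (h₁ : c₁ ∈ routes) (h₂ : c₂ ∈ routes)
    (hm₁ : v ∈ c₁) (hm₂ : v ∈ c₂) : c₁ = c₂ := by
  by_contra hne
  obtain ⟨A, B, rfl⟩ := List.append_of_mem h₁
  have hsum := hcover v hv
  rw [List.map_append, List.sum_append, List.map_cons, List.sum_cons] at hsum
  have hAnn : 0 ≤ (A.map (fun c => (c.count v : ℤ))).sum :=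
    List.sum_nonneg (by intro x hx; obtain ⟨c, _, rfl⟩ := List.mem_map.mp hx; positivity)
  have hBnn : 0 ≤ (B.map (fun c => (c.count v : ℤ))).sum :=
    List.sum_nonneg (by intro x hx; obtain ⟨c, _, rfl⟩ := List.mem_map.mp hx; positivity)
  have h1 : 1 ≤ (c₁.count v : ℤ) := by
    have := List.count_pos_iff.mpr hm₁; omega
  have h2 : 1 ≤ (c₂.count v : ℤ) := by
    have := List.count_pos_iff.mpr hm₂; omega
  have h₂'' : c₂ ∈ A ∨ c₂ ∈ B := by
    rcases List.mem_append.mp h₂ with h | h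
    · exact Or.inl h
    · rcases List.mem_cons.mp h with h | h
      · exact absurd h.symm hne
      · exact Or.inr h
  rcases h₂'' with h | h
  · have := List.single_le_sum
      (l := A.map (fun c => (c.count v : ℤ)))
      (by intro x hx; obtain ⟨c, _, rfl⟩ := List.mem_map.mp hx; positivity)
      _ (List.mem_map.mpr ⟨c₂, h, rfl⟩)
    omega
  · have := List.single_le_sum
      (l := B.map (fun c => (c.count v : ℤ)))
      (by intro x hx; obtain ⟨c, _, rfl⟩ := List.mem_map.mp hx; positivity)
      _ (List.mem_map.mpr ⟨c₂, h, rfl⟩)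
    omega

lemma arc_left_mem {u v : V} {c : List V}
    (h : (u, v) ∈ arcsOf (depot :: c ++ [depot])) (hu : u ≠ depot) : u ∈ c := by
  obtain ⟨A, B, hAB⟩ := mem_arcsOf h
  have hm : u ∈ depot :: c ++ [depot] := by rw [hAB]; simp
  simp only [List.mem_cons, List.mem_append, List.mem_singleton] at hm
  tauto

lemma arc_right_mem {u v : V} {c : List V}
    (h : (u, v) ∈ arcsOf (depot :: c ++ [depot])) (hv : v ≠ depot) : v ∈ c := by
  obtain ⟨A, B, hAB⟩ := mem_arcsOf h
  have hm : v ∈ depot :: c ++ [depot] := by rw [hAB]; simp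
  simp only [List.mem_cons, List.mem_append, List.mem_singleton] at hm
  tauto

lemma chain_route
    (hcover : ∀ u : V, u ≠ depot → (routes.map (fun c => (c.count u : ℤ))).sum = 1) :
    ∀ (P : List V) (u v : V),
    (∀ a ∈ arcsOf (u :: v :: P), ∃ c ∈ routes, a ∈ arcsOf (depot :: c ++ [depot])) →
    depot ∉ (v :: P).dropLast →
    ∃ c ∈ routes, ∀ a ∈ arcsOf (u :: v :: P), a ∈ arcsOf (depot :: c ++ [depot]) := by
  intro P
  induction P with
  | nil =>
    intro u v h _
    obtain ⟨c, hc, hm⟩ := h (u, v) (by rw [arcsOf_cons₂]; exact List.mem_cons_self)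
    refine ⟨c, hc, fun a ha => ?_⟩
    rw [arcsOf_cons₂, arcsOf_single] at ha
    simp only [List.mem_singleton] at ha
    rw [ha]; exact hm
  | cons w P' ih =>
    intro u v h hint
    have hv : v ≠ depot := by
      intro hveq
      exact hint (by rw [← hveq, List.dropLast_cons₂]; exact List.mem_cons_self)
    obtain ⟨c₂, hc₂, h₂⟩ := ih v w
      (fun a ha => h a (by rw [arcsOf_cons₂]; exact List.mem_cons_of_mem _ ha))
      (fun hm => hint (by rw [List.dropLast_cons₂]; exact List.mem_cons_of_mem _ hm))
    obtain ⟨c₁, hc₁, h₁⟩ := h (u, v) (by rw [arcsOf_cons₂]; exact List.mem_cons_self)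
    have hv₁ : v ∈ c₁ := arc_right_mem h₁ hv
    have hv₂ : v ∈ c₂ :=
      arc_left_mem (h₂ (v, w) (by rw [arcsOf_cons₂]; exact List.mem_cons_self)) hv
    have hceq : c₁ = c₂ := unique_route hcover hv hc₁ hc₂ hv₁ hv₂
    refine ⟨c₁, hc₁, fun a ha => ?_⟩
    rw [arcsOf_cons₂] at ha
    rcases List.mem_cons.mp ha with rfl | ha
    · exact h₁
    · rw [hceq]; exact h₂ a ha

lemma infix_of_arcs {c : List V} (hc : c.Nodup) :
    ∀ (P : List V) (u v : V),
    (∀ a ∈ arcsOf (u :: v :: P), a ∈ arcsOf (depot :: c ++ [depot])) →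
    depot ∉ (v :: P).dropLast →
    ∃ A B, depot :: c ++ [depot] = A ++ (u :: v :: P) ++ B := by
  intro P
  induction P with
  | nil =>
    intro u v h _
    obtain ⟨A, B, hAB⟩ :=
      mem_arcsOf (h (u, v) (by rw [arcsOf_cons₂]; exact List.mem_cons_self))
    exact ⟨A, B, by rw [hAB]; simp⟩
  | cons w P' ih =>
    intro u v h hint
    have hv : v ≠ depot := by
      intro hveq
      exact hint (by rw [← hveq, List.dropLast_cons₂]; exact List.mem_cons_self)
    obtain ⟨A, B, hAB⟩ := ih v w
      (fun a ha => h a (by rw [arcsOf_cons₂]; exact List.mem_cons_of_mem _ ha))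
      (fun hm => hint (by rw [List.dropLast_cons₂]; exact List.mem_cons_of_mem _ hm))
    obtain ⟨A', B', hA'B'⟩ :=
      mem_arcsOf (h (u, v) (by rw [arcsOf_cons₂]; exact List.mem_cons_self))
    have hvc : v ∈ c := by
      have hm : v ∈ depot :: c ++ [depot] := by rw [hAB]; simp
      simp only [List.mem_cons, List.mem_append, List.mem_singleton] at hm
      tauto
    have hcount : (depot :: c ++ [depot]).count v = 1 := by
      rw [count_route hv]
      exact List.count_eq_one_of_mem hc hvc
    have hroute2 : depot :: c ++ [depot] = (A' ++ [u]) ++ v :: B' := by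
      rw [hA'B']; simp
    have hAB2 : A ++ v :: (w :: P' ++ B) = (A' ++ [u]) ++ v :: B' := by
      have h0 := hAB.symm.trans hroute2
      simp only [List.cons_append, List.append_assoc, List.nil_append,
        List.singleton_append] at h0 ⊢
      exact h0
    have hvA : v ∉ A := by
      intro hm
      have h1 : 1 ≤ A.count v := List.count_pos_iff.mpr hm
      have h2 : 1 ≤ (v :: (w :: P' ++ B)).count v := by
        rw [List.count_cons_self]; omega
      have h3 : (depot :: c ++ [depot]).count v
          = A.count v + (v :: (w :: P' ++ B)).count v := by
        conv_lhs => rw [show depot :: c ++ [depot] = A ++ v :: (w :: P' ++ B) by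
          rw [hAB]; simp]
        rw [List.count_append]
      omega
    have hvA' : v ∉ A' ++ [u] := by
      intro hm
      have h1 : 1 ≤ (A' ++ [u]).count v := List.count_pos_iff.mpr hm
      have h2 : 1 ≤ (v :: B').count v := by rw [List.count_cons_self]; omega
      have h3 : (depot :: c ++ [depot]).count v
          = (A' ++ [u]).count v + (v :: B').count v := by
        conv_lhs => rw [hroute2]
        rw [List.count_append]
      omega
    obtain ⟨hAeq, hBeq⟩ := pre_eq A (A' ++ [u]) _ _ hAB2 hvA hvA'
    refine ⟨A', B, ?_⟩
    rw [hAB, hAeq]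
    simp

end RouteLemmas

end Helpers

/-- an integer solution of the master problem (covering each customer
exactly once with elementary, capacity-feasible routes) uses only TSP-optimal routes
if and only if it satisfies every TSP-optimality cut `x(A(P)) ≤ |A(P)| - 1` for every
TSP-violating path `P` with no depot as intermediate node (here the interior nodes of
`P` are distinct non-depot nodes and only the two endpoints may coincide). -/
theorem tsp_optimality_cuts_characterize [DecidableEq V]
    (d : V → V → ℝ) (depot : V) (dem : V → ℝ) (Qcap : ℝ)
    (routes : List (List V))
    (hnd : ∀ c ∈ routes, c.Nodup) (hdep : ∀ c ∈ routes, depot ∉ c)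
    (hne : ∀ c ∈ routes, c ≠ [])
    (hcap : ∀ c ∈ routes, (c.map dem).sum ≤ Qcap)
    (hcover : ∀ u : V, u ≠ depot → (routes.map (fun c => (c.count u : ℤ))).sum = 1) :
    (∀ c ∈ routes, TSPopt d depot c) ↔
    (∀ P : List V, P.dropLast.Nodup → (P.drop 1).Nodup →
      depot ∉ (P.drop 1).dropLast → TSPviolating d P →
      ((arcsOf P).map (flow depot routes)).sum ≤ ((arcsOf P).length : ℤ) - 1) := by
  constructor
  · -- TSP-optimal routes satisfy all cuts
    intro hopt P hP1 hP2 hP3 hviol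
    match P, hviol with
    | [], hviol => exact absurd hviol (not_violating_small d (by simp))
    | [x], hviol => exact absurd hviol (not_violating_small d (by simp))
    | u :: v :: P₂, hviol =>
    clear hP1 hP2
    by_contra hgt
    push_neg at hgt
    have hPne : (u :: v :: P₂) ≠ [depot, depot] := by
      intro h
      obtain ⟨Q, h1, h2, h3, h4⟩ := hviol
      rw [h] at h1 h4
      rw [perm_pair h1] at h4
      exact lt_irrefl _ h4
    have hdd : (depot, depot) ∉ arcsOf (u :: v :: P₂) := depot_arc_not_mem hP3 hPne
    have hle1 : ∀ a ∈ arcsOf (u :: v :: P₂), flow depot routes a ≤ 1 := by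
      rintro ⟨a1, a2⟩ ha
      exact flow_le_one hcover (fun h => hdd (h ▸ ha))
    have hflow1 : ∀ a ∈ arcsOf (u :: v :: P₂), 1 ≤ flow depot routes a := by
      by_contra hcon
      push_neg at hcon
      obtain ⟨a₀, ha₀, hlt⟩ := hcon
      obtain ⟨X, Y, hXY⟩ := List.append_of_mem ha₀
      rw [hXY, List.map_append, List.sum_append, List.map_cons, List.sum_cons,
        List.length_append, List.length_cons] at hgt
      have hX := sum_map_le_length (flow depot routes) X
        (fun a ha => hle1 a (by rw [hXY]; exact List.mem_append_left _ ha))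
      have hY := sum_map_le_length (flow depot routes) Y
        (fun a ha => hle1 a (by rw [hXY]
                                exact List.mem_append_right _ (List.mem_cons_of_mem _ ha)))
      omega
    have hmem : ∀ a ∈ arcsOf (u :: v :: P₂),
        ∃ c ∈ routes, a ∈ arcsOf (depot :: c ++ [depot]) :=
      fun a ha => flow_pos_mem (lt_of_lt_of_le zero_lt_one (hflow1 a ha))
    have hint' : depot ∉ (v :: P₂).dropLast := by simpa using hP3
    obtain ⟨c₀, hc₀, hall⟩ := chain_route hcover P₂ u v hmem hint'
    obtain ⟨A, B, hAB⟩ := infix_of_arcs (hnd c₀ hc₀) P₂ u v hall hint'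
    obtain ⟨Q, hQperm, hQh, hQl, hQlt⟩ := hviol
    obtain ⟨M, t, hMt⟩ := (List.eq_nil_or_concat (v :: P₂)).resolve_left (by simp)
    rw [List.concat_eq_append] at hMt
    have hPeq : u :: v :: P₂ = u :: M ++ [t] := by rw [hMt]; rfl
    have hPlast : (u :: v :: P₂).getLast? = some t := by
      rw [hPeq, show u :: M ++ [t] = (u :: M) ++ [t] from rfl, List.getLast?_concat]
    have hQlen : 2 ≤ Q.length := by
      have := hQperm.length_eq
      simp only [List.length_cons] at this
      omega
    obtain ⟨MQ, hQeq⟩ := head_last_decomp hQlen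
      (hQh.trans (rfl : (u :: v :: P₂).head? = some u)) (hQl.trans hPlast)
    have hQP' : (MQ ++ [t]).Perm (M ++ [t]) := by
      have h0 : (u :: (MQ ++ [t])).Perm (u :: (M ++ [t])) := by
        rw [show u :: (MQ ++ [t]) = u :: MQ ++ [t] from rfl, ← hQeq,
          show u :: (M ++ [t]) = u :: M ++ [t] from rfl, ← hPeq]
        exact hQperm
      exact (List.perm_cons u).mp h0
    have hL : depot :: c₀ ++ [depot] = A ++ u :: (M ++ t :: B) := by
      rw [hAB, hPeq]; simp
    have hplenL : plen d (depot :: c₀ ++ [depot])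
        = plen d (A ++ [u]) + plen d (u :: v :: P₂) + plen d (t :: B) := by
      rw [hL, plen_append_cons]
      have h2 : plen d (u :: (M ++ t :: B))
          = plen d ((u :: M) ++ [t]) + plen d (t :: B) := by
        have h3 := plen_append_cons d (u :: M) t B
        simpa using h3
      rw [h2, show (u :: M) ++ [t] = u :: M ++ [t] from rfl, ← hPeq]
      ring
    have hplenL' : plen d (A ++ u :: (MQ ++ t :: B))
        = plen d (A ++ [u]) + plen d Q + plen d (t :: B) := by
      rw [plen_append_cons]
      have h2 : plen d (u :: (MQ ++ t :: B))
          = plen d ((u :: MQ) ++ [t]) + plen d (t :: B) := by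
        have h3 := plen_append_cons d (u :: MQ) t B
        simpa using h3
      rw [h2, show (u :: MQ) ++ [t] = u :: MQ ++ [t] from rfl, ← hQeq]
      ring
    have hlt' : plen d (A ++ u :: (MQ ++ t :: B)) < plen d (depot :: c₀ ++ [depot]) := by
      rw [hplenL, hplenL']
      linarith
    have hhead : (A ++ u :: (MQ ++ t :: B)).head? = some depot := by
      have h1 : (A ++ u :: (MQ ++ t :: B)).head? = (A ++ u :: (M ++ t :: B)).head? := by
        cases A <;> simp
      rw [h1, ← hL]
      simp
    have hlast : (A ++ u :: (MQ ++ t :: B)).getLast? = some depot := by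
      have h1 : (A ++ u :: (MQ ++ t :: B)).getLast? = (t :: B).getLast? := by
        rw [show A ++ u :: (MQ ++ t :: B) = (A ++ u :: MQ) ++ t :: B by simp,
          List.getLast?_append_cons]
      have h2 : (depot :: c₀ ++ [depot]).getLast? = (t :: B).getLast? := by
        rw [hL, show A ++ u :: (M ++ t :: B) = (A ++ u :: M) ++ t :: B by simp,
          List.getLast?_append_cons]
      rw [h1, ← h2, show depot :: c₀ ++ [depot] = (depot :: c₀) ++ [depot] from rfl,
        List.getLast?_concat]
    have hlen' : 2 ≤ (A ++ u :: (MQ ++ t :: B)).length := by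
      simp only [List.length_append, List.length_cons]
      omega
    obtain ⟨m, hm⟩ := head_last_decomp hlen' hhead hlast
    have hpermL : (A ++ u :: (MQ ++ t :: B)).Perm (depot :: c₀ ++ [depot]) := by
      rw [hL]
      refine List.Perm.append_left A (List.Perm.cons u ?_)
      have h0 := hQP'.append_right B
      simpa using h0
    have hmc : m.Perm c₀ := by
      have h1 : (depot :: m ++ [depot]).Perm (depot :: c₀ ++ [depot]) := hm ▸ hpermL
      have h2 : (m ++ [depot]).Perm (c₀ ++ [depot]) := (List.perm_cons depot).mp h1
      have h3 : (depot :: m).Perm (depot :: c₀) :=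
        ((List.perm_append_singleton depot m).symm.trans h2).trans
          (List.perm_append_singleton depot c₀)
      exact (List.perm_cons depot).mp h3
    have hle := hopt c₀ hc₀ m hmc
    unfold routeLen at hle
    rw [hm] at hlt'
    linarith
  · -- cuts imply TSP-optimality
    intro hcut c hc
    by_contra hnopt
    unfold TSPopt at hnopt
    push_neg at hnopt
    obtain ⟨c', hperm, hlt⟩ := hnopt
    have h1 : (depot :: c ++ [depot]).dropLast.Nodup := by
      rw [show depot :: c ++ [depot] = (depot :: c) ++ [depot] from rfl,
        List.dropLast_concat]
      exact List.nodup_cons.mpr ⟨hdep c hc, hnd c hc⟩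
    have h2 : ((depot :: c ++ [depot]).drop 1).Nodup := by
      rw [show (depot :: c ++ [depot]).drop 1 = c ++ [depot] from rfl]
      refine List.Nodup.append (hnd c hc) (List.nodup_singleton _) ?_
      intro a ha hb
      simp only [List.mem_singleton] at hb
      exact hdep c hc (hb ▸ ha)
    have h3 : depot ∉ ((depot :: c ++ [depot]).drop 1).dropLast := by
      rw [show (depot :: c ++ [depot]).drop 1 = c ++ [depot] from rfl,
        List.dropLast_concat]
      exact hdep c hc
    have hviol : TSPviolating d (depot :: c ++ [depot]) := by
      refine ⟨depot :: c' ++ [depot], ?_, ?_, ?_, ?_⟩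
      · exact List.Perm.cons depot (hperm.append_right [depot])
      · simp
      · rw [show depot :: c' ++ [depot] = (depot :: c') ++ [depot] from rfl,
          List.getLast?_concat,
          show depot :: c ++ [depot] = (depot :: c) ++ [depot] from rfl,
          List.getLast?_concat]
      · exact hlt
    have hcut' := hcut (depot :: c ++ [depot]) h1 h2 h3 hviol
    have hge : ((arcsOf (depot :: c ++ [depot])).length : ℤ)
        ≤ ((arcsOf (depot :: c ++ [depot])).map (flow depot routes)).sum := by
      apply length_le_sum_map
      intro a ha
      have hb1 : (1 : ℤ) ≤ ((arcsOf (depot :: c ++ [depot])).count a : ℤ) := by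
        have := List.count_pos_iff.mpr ha
        omega
      have hb2 : ((arcsOf (depot :: c ++ [depot])).count a : ℤ)
          ≤ flow depot routes a := by
        unfold flow
        exact List.single_le_sum
          (by intro x hx; obtain ⟨c'', _, rfl⟩ := List.mem_map.mp hx; positivity)
          _ (List.mem_map.mpr ⟨c, hc, rfl⟩)
      omega
    omega
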